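/- arXiv:2104.00907 — 4 statements merged into one kernel-verified Lean document; each statement's English description precedes it below -/
import Mathlib

section
/- Let n ≥ 4 be an even integer. Let f and g be normalized analytic functions on 𝔻 such that Re( f(z)/g(z) ) > 0 and Re( g(z)/z ) > 0 for all z ∈ 𝔻 \ {0}. Then for every z with 0 < |z| < ( √(5n²+6n+5) − 2(n+1) ) / (n−1), one has z f'(z)/f(z) ∈ Ω_{nL}. (This is the S*_{nL}-radius of the class F₁.) -/
open Complex Metric Set

/-- The function φ_{nL}(z) = 1 + n z/(n+1) + z^n/(n+1). -/
noncomputable def phinL (n : ℕ) (z : ℂ) : ℂ :=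
  1 + (n : ℂ) * z / ((n : ℂ) + 1) + z ^ n / ((n : ℂ) + 1)

/-- Ω_{nL} = φ_{nL}(𝔻), the image of the open unit disk. -/
def OmeganL (n : ℕ) : Set ℂ := phinL n '' ball (0 : ℂ) 1

/-- f is analytic on the unit disk with f(0) = 0 and f'(0) = 1. -/
def IsNormalizedAnalytic (f : ℂ → ℂ) : Prop :=
  AnalyticOnNhd ℂ f (ball (0 : ℂ) 1) ∧ f 0 = 0 ∧ deriv f 0 = 1

/-- p is subordinate to ψ on the unit disk. -/
def Subord (p ψ : ℂ → ℂ) : Prop :=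
  ∃ ω : ℂ → ℂ, AnalyticOnNhd ℂ ω (ball (0 : ℂ) 1) ∧ ω 0 = 0 ∧
    (∀ z ∈ ball (0 : ℂ) 1, ω z ∈ ball (0 : ℂ) 1) ∧
    (∀ z ∈ ball (0 : ℂ) 1, p z = ψ (ω z))

/-- Membership in the class S*_{nL}. -/
def MemSnL (n : ℕ) (f : ℂ → ℂ) : Prop :=
  IsNormalizedAnalytic f ∧ (∀ z ∈ ball (0 : ℂ) 1, z ≠ 0 → f z ≠ 0) ∧
  Subord (fun z => if z = 0 then 1 else z * deriv f z / f z) (phinL n)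

noncomputable def mob (a z : ℂ) : ℂ := (a - z) / (1 - (starRingEnd ℂ) a * z)

lemma mob_denom_ne {a z : ℂ} (ha : ‖a‖ < 1) (hz : ‖z‖ < 1) :
    1 - (starRingEnd ℂ) a * z ≠ 0 := by
  intro h
  have h1 : (starRingEnd ℂ) a * z = 1 := by linear_combination -h
  have : ‖(starRingEnd ℂ) a * z‖ = 1 := by simp [h1]
  rw [norm_mul, Complex.norm_conj] at this
  nlinarith [norm_nonneg a, norm_nonneg z]

lemma mob_normSq_key (a z : ℂ) :
    Complex.normSq (1 - (starRingEnd ℂ) a * z) - Complex.normSq (a - z)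
      = (1 - Complex.normSq a) * (1 - Complex.normSq z) := by
  simp only [Complex.normSq_apply, Complex.sub_re, Complex.sub_im, Complex.mul_re, Complex.mul_im,
    Complex.conj_re, Complex.conj_im, Complex.one_re, Complex.one_im]
  ring

lemma mob_mem {a z : ℂ} (ha : ‖a‖ < 1) (hz : ‖z‖ < 1) :
    ‖mob a z‖ < 1 := by
  have hd := mob_denom_ne ha hz
  have hkey := mob_normSq_key a z
  have h1 : Complex.normSq a < 1 := by rw [← Complex.sq_norm]; nlinarith [norm_nonneg a]
  have h2 : Complex.normSq z < 1 := by rw [← Complex.sq_norm]; nlinarith [norm_nonneg z]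
  have hlt : ‖a - z‖ < ‖1 - (starRingEnd ℂ) a * z‖ := by
    have := Complex.sq_norm (a - z)
    have := Complex.sq_norm (1 - (starRingEnd ℂ) a * z)
    refine lt_of_pow_lt_pow_left₀ 2 (norm_nonneg _) ?_
    nlinarith
  rw [mob, norm_div, div_lt_one (by simpa using norm_pos_iff.mpr hd)]
  exact hlt

lemma mob_zero (a : ℂ) : mob a 0 = a := by simp [mob]

lemma mob_self {a : ℂ} (ha : ‖a‖ < 1) : mob a a = 0 := by simp [mob]

lemma mob_hasDerivAt {a z : ℂ} (h : 1 - (starRingEnd ℂ) a * z ≠ 0) :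
    HasDerivAt (mob a) (((Complex.normSq a : ℂ) - 1) / (1 - (starRingEnd ℂ) a * z) ^ 2) z := by
  have h1 : HasDerivAt (fun w => a - w) (-1) z := by
    simpa using (hasDerivAt_id z).const_sub a
  have h2 : HasDerivAt (fun w => 1 - (starRingEnd ℂ) a * w) (-((starRingEnd ℂ) a)) z := by
    simpa using ((hasDerivAt_id z).const_mul ((starRingEnd ℂ) a)).const_sub 1
  have := h1.div h2 h
  refine this.congr_deriv ?_
  rw [← Complex.mul_conj]
  ring


lemma schwarz_pick {w : ℂ → ℂ} (hd : DifferentiableOn ℂ w (ball 0 1))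
    (hm : MapsTo w (ball 0 1) (ball 0 1)) {z : ℂ} (hz : z ∈ ball (0:ℂ) 1) :
    ‖deriv w z‖ * (1 - ‖z‖ ^ 2) ≤ 1 - ‖w z‖ ^ 2 := by
  have hz1 : ‖z‖ < 1 := by simpa [mem_ball, Complex.dist_eq] using hz
  have ha1 : ‖w z‖ < 1 := by
    simpa [mem_ball, Complex.dist_eq] using hm hz
  set a := w z with ha
  -- F = mob a ∘ w ∘ mob z
  set F : ℂ → ℂ := fun u => mob a (w (mob z u)) with hF
  have hmapsz : ∀ u ∈ ball (0:ℂ) 1, mob z u ∈ ball (0:ℂ) 1 := fun u hu => by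
    simpa [mem_ball, Complex.dist_eq] using
      mob_mem hz1 (by simpa [mem_ball, Complex.dist_eq] using hu)
  have hFd : DifferentiableOn ℂ F (ball 0 1) := by
    intro u hu
    have h1 : DifferentiableAt ℂ (mob z) u :=
      (mob_hasDerivAt (mob_denom_ne hz1 (by simpa [mem_ball, Complex.dist_eq] using hu))).differentiableAt
    have h2 : DifferentiableAt ℂ w (mob z u) :=
      hd.differentiableAt (isOpen_ball.mem_nhds (hmapsz u hu))
    have h3 : DifferentiableAt ℂ (mob a) (w (mob z u)) := by
      have := hm (hmapsz u hu)
      exact (mob_hasDerivAt (mob_denom_ne ha1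
        (by simpa [mem_ball, Complex.dist_eq] using this))).differentiableAt
    exact ((h3.comp _ h2).comp _ h1).differentiableWithinAt
  have hFm : MapsTo F (ball 0 1) (ball 0 1) := fun u hu => by
    have := hm (hmapsz u hu)
    simpa [mem_ball, Complex.dist_eq, hF] using
      mob_mem ha1 (by simpa [mem_ball, Complex.dist_eq] using this)
  have hF0 : F 0 = 0 := by simp [hF, mob_zero, ← ha, mob_self ha1]
  have hSch := Complex.norm_deriv_le_one_of_mapsTo_ball hFd (by rw [hF0]; exact hFm.mono_right ball_subset_closedBall) one_pos
  -- compute deriv F 0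
  have hna : Complex.normSq a < 1 := by
    rw [← Complex.sq_norm]; nlinarith [norm_nonneg a]
  have hnz : Complex.normSq z < 1 := by
    rw [← Complex.sq_norm]; nlinarith [norm_nonneg z]
  have hd1 : HasDerivAt (mob z) ((Complex.normSq z : ℂ) - 1) 0 := by
    have := mob_hasDerivAt (a := z) (z := 0) (by simp)
    simpa using this
  have hd2 : HasDerivAt w (deriv w z) (mob z 0) := by
    rw [mob_zero]
    exact (hd.differentiableAt (isOpen_ball.mem_nhds hz)).hasDerivAt
  have hd3 : HasDerivAt (mob a) (((Complex.normSq a : ℂ) - 1) / (1 - (starRingEnd ℂ) a * a) ^ 2) a := by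
    exact mob_hasDerivAt (by
      rw [← Complex.normSq_eq_conj_mul_self]
      intro h
      have : (Complex.normSq a : ℂ) = 1 := by linear_combination -h
      have := congrArg Complex.re this
      simp at this
      nlinarith)
  have hcomp : HasDerivAt F
      ((((Complex.normSq a : ℂ) - 1) / (1 - (starRingEnd ℂ) a * a) ^ 2) * (deriv w z * ((Complex.normSq z : ℂ) - 1))) 0 := by
    have h2 : HasDerivAt (fun u => w (mob z u)) (deriv w z * ((Complex.normSq z : ℂ) - 1)) 0 := by
      have := HasDerivAt.comp (0:ℂ) hd2 hd1
      exact this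
    have h3 : HasDerivAt (mob a) (((Complex.normSq a : ℂ) - 1) / (1 - (starRingEnd ℂ) a * a) ^ 2) ((fun u => w (mob z u)) 0) := by
      rw [show (fun u => w (mob z u)) 0 = a by simp [mob_zero, ha]]
      exact hd3
    exact HasDerivAt.comp (0:ℂ) h3 h2
  have hderivF : deriv F 0 = (((Complex.normSq a : ℂ) - 1) / (1 - (starRingEnd ℂ) a * a) ^ 2) * (deriv w z * ((Complex.normSq z : ℂ) - 1)) := hcomp.deriv
  rw [hderivF] at hSch
  -- simplify: 1 - conj a * a = 1 - normSq a
  have hcs : (starRingEnd ℂ) a * a = (Complex.normSq a : ℂ) := (Complex.normSq_eq_conj_mul_self).symm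
  rw [hcs] at hSch
  have habs : ‖(((Complex.normSq a : ℂ) - 1) / (1 - (Complex.normSq a : ℂ)) ^ 2) * (deriv w z * ((Complex.normSq z : ℂ) - 1))‖
      = (1 - Complex.normSq a)⁻¹ * (‖deriv w z‖ * (1 - Complex.normSq z)) := by
    rw [norm_mul, norm_div, norm_mul, norm_pow]
    have e1 : (Complex.normSq a : ℂ) - 1 = ((Complex.normSq a - 1 : ℝ) : ℂ) := by push_cast; ring
    have e2 : (1 : ℂ) - (Complex.normSq a : ℂ) = ((1 - Complex.normSq a : ℝ) : ℂ) := by push_cast; ring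
    have e3 : (Complex.normSq z : ℂ) - 1 = ((Complex.normSq z - 1 : ℝ) : ℂ) := by push_cast; ring
    rw [e1, e2, e3, Complex.norm_real, Real.norm_eq_abs, Complex.norm_real, Real.norm_eq_abs, Complex.norm_real, Real.norm_eq_abs]
    rw [_root_.abs_of_nonpos (by linarith : Complex.normSq a - 1 ≤ 0), _root_.abs_of_nonneg (by linarith : (0:ℝ) ≤ 1 - Complex.normSq a), _root_.abs_of_nonpos (by linarith : Complex.normSq z - 1 ≤ 0)]
    have hne : (1:ℝ) - Complex.normSq a ≠ 0 := by nlinarith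
    field_simp
    ring
  rw [habs] at hSch
  have h1a : 0 < 1 - Complex.normSq a := by linarith
  rw [inv_mul_le_iff₀ h1a, mul_one] at hSch
  calc ‖deriv w z‖ * (1 - ‖z‖ ^ 2)
      = ‖deriv w z‖ * (1 - Complex.normSq z) := by rw [Complex.sq_norm]
    _ ≤ 1 - Complex.normSq a := hSch
    _ = 1 - ‖w z‖ ^ 2 := by rw [Complex.sq_norm]

lemma cara_deriv {p : ℂ → ℂ} (hd : DifferentiableOn ℂ p (ball 0 1))
    (hp : ∀ z ∈ ball (0:ℂ) 1, 0 < (p z).re) {z : ℂ} (hz : z ∈ ball (0:ℂ) 1) :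
    ‖deriv p z‖ * (1 - ‖z‖ ^ 2) ≤ 2 * ‖p z‖ := by
  have hne : ∀ u ∈ ball (0:ℂ) 1, p u + 1 ≠ 0 := by
    intro u hu h
    have := hp u hu
    have h2 : (p u + 1).re = (p u).re + 1 := by simp
    rw [h] at h2
    simp at h2
    linarith
  set w : ℂ → ℂ := fun u => (p u - 1) / (p u + 1) with hw
  have hkey : ∀ u : ℂ, Complex.normSq (p u + 1) - Complex.normSq (p u - 1) = 4 * (p u).re := by
    intro u
    simp [Complex.normSq_apply, Complex.add_re, Complex.add_im, Complex.sub_re, Complex.sub_im]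
    ring
  have hwm : MapsTo w (ball 0 1) (ball 0 1) := by
    intro u hu
    have h4 : 0 < (p u).re := hp u hu
    have hd0 : ‖p u + 1‖ ≠ 0 := fun h => hne u hu (norm_eq_zero.mp h)
    rw [mem_ball_zero_iff, hw]
    simp only [norm_div]
    rw [div_lt_one (lt_of_le_of_ne (norm_nonneg _) (Ne.symm hd0))]
    refine lt_of_pow_lt_pow_left₀ 2 (norm_nonneg _) ?_
    rw [Complex.sq_norm, Complex.sq_norm]
    nlinarith [hkey u]
  have hwd : DifferentiableOn ℂ w (ball 0 1) := by
    intro u hu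
    exact ((hd u hu).sub_const 1).div ((hd u hu).add_const 1) (hne u hu)
  have hsp := schwarz_pick hwd hwm hz
  -- deriv w z = 2 * deriv p z / (p z + 1)^2
  have hpd : HasDerivAt p (deriv p z) z := (hd.differentiableAt (isOpen_ball.mem_nhds hz)).hasDerivAt
  have hwder : HasDerivAt w (2 * deriv p z / (p z + 1) ^ 2) z := by
    have := ((hpd.sub_const 1).div (hpd.add_const 1) (hne z hz))
    refine this.congr_deriv ?_
    ring
  rw [hwder.deriv] at hsp
  -- 1 - |w z|^2 = 4 re (p z) / normSq (p z + 1)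
  have hdz : Complex.normSq (p z + 1) ≠ 0 := fun h => hne z hz (Complex.normSq_eq_zero.mp h)
  have hdzpos : 0 < Complex.normSq (p z + 1) :=
    lt_of_le_of_ne (Complex.normSq_nonneg _) (Ne.symm hdz)
  have hwz : 1 - ‖w z‖ ^ 2 = 4 * (p z).re / Complex.normSq (p z + 1) := by
    rw [hw]
    simp only [norm_div, div_pow, Complex.sq_norm]
    rw [eq_div_iff hdz]
    field_simp
    linarith [hkey z]
  rw [hwz] at hsp
  have habsw : ‖2 * deriv p z / (p z + 1) ^ 2‖
      = 2 * ‖deriv p z‖ / Complex.normSq (p z + 1) := by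
    rw [norm_div, norm_mul, norm_pow, Complex.sq_norm]
    norm_num
  rw [habsw] at hsp
  rw [div_mul_eq_mul_div, div_le_div_iff₀ hdzpos hdzpos] at hsp
  have hre : (p z).re ≤ ‖p z‖ := Complex.re_le_norm _
  nlinarith [norm_nonneg (deriv p z), Complex.sq_norm z]

lemma psi_surj (n : ℕ) (hn : 4 ≤ n) {c : ℂ} (hc : ‖c‖ < (n:ℝ) - 1) :
    ∃ z : ℂ, ‖z‖ < 1 ∧ (n:ℂ) * z + z ^ n = c := by
  set ψ : ℂ → ℂ := fun z => (n:ℂ) * z + z ^ n with hψ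
  have hdiff : Differentiable ℂ ψ := by
    intro z
    exact ((differentiable_id.const_mul _).add (differentiable_id.pow n)).differentiableAt
  have hanal : AnalyticOnNhd ℂ ψ univ :=
    hdiff.differentiableOn.analyticOnNhd isOpen_univ
  have hopen : IsOpen (ψ '' ball 0 1) := by
    rcases hanal.is_constant_or_isOpen isPreconnected_univ with h | h
    · exfalso
      obtain ⟨w, hw⟩ := h
      have h0 := hw 0 (mem_univ _)
      have h1 := hw 1 (mem_univ _)
      simp [hψ, zero_pow (by omega : n ≠ 0)] at h0 h1
      rw [← h0] at h1
      have hne : ((n:ℂ) + 1) ≠ 0 := by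
        have := Nat.cast_add_one_ne_zero (R := ℂ) n
        push_cast at this ⊢
        exact this
      exact hne h1
    · exact h _ (subset_univ _) isOpen_ball
  -- boundary estimate
  have hbnd : ∀ z : ℂ, ‖z‖ = 1 → (n:ℝ) - 1 ≤ ‖ψ z‖ := by
    intro z hz1
    have h1 : ‖(n:ℂ) * z‖ = (n:ℝ) := by
      rw [norm_mul, hz1, mul_one, Complex.norm_natCast]
    have h2 : ‖z ^ n‖ = 1 := by rw [norm_pow, hz1, one_pow]
    calc (n:ℝ) - 1 = ‖(n:ℂ) * z‖ - ‖z ^ n‖ := by rw [h1, h2]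
      _ ≤ ‖(n:ℂ) * z + z ^ n‖ := by
          have h3 : ‖(n:ℂ)*z‖ ≤ ‖(n:ℂ)*z + z^n‖ + ‖z^n‖ := by
            calc ‖(n:ℂ)*z‖ = ‖((n:ℂ)*z + z^n) + (-(z^n))‖ := by ring_nf
              _ ≤ ‖(n:ℂ)*z + z^n‖ + ‖-(z^n)‖ := norm_add_le _ _
              _ = ‖(n:ℂ)*z + z^n‖ + ‖z^n‖ := by rw [norm_neg]
          linarith
      _ = ‖ψ z‖ := rfl
  -- clopen argument
  have hn1 : (0:ℝ) < (n:ℝ) - 1 := by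
    have : (4:ℝ) ≤ (n:ℝ) := by exact_mod_cast hn
    linarith
  have hKsub : ∀ x ∈ ball (0:ℂ) ((n:ℝ)-1), x ∈ ψ '' closedBall 0 1 → x ∈ ψ '' ball 0 1 := by
    rintro x hx ⟨z, hz, rfl⟩
    refine ⟨z, ?_, rfl⟩
    rw [mem_closedBall_zero_iff] at hz
    rw [mem_ball_zero_iff]
    rcases lt_or_eq_of_le hz with h | h
    · exact h
    · exfalso
      have := hbnd z h
      rw [mem_ball_zero_iff] at hx
      linarith
  have hK : IsCompact (ψ '' closedBall 0 1) :=
    (isCompact_closedBall 0 1).image hdiff.continuous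
  have hpre : IsPreconnected (ball (0:ℂ) ((n:ℝ)-1)) := (convex_ball _ _).isPreconnected
  by_contra hcon
  push_neg at hcon
  -- c ∉ ψ '' ball 0 1
  have hcnot : c ∉ ψ '' ball 0 1 := by
    rintro ⟨z, hz, hzc⟩
    exact hcon z (by simpa [mem_ball_zero_iff] using hz) hzc
  have hconn := hpre (ψ '' ball 0 1) ((ψ '' closedBall 0 1)ᶜ) hopen hK.isClosed.isOpen_compl
  have hsub : ball (0:ℂ) ((n:ℝ)-1) ⊆ ψ '' ball 0 1 ∪ (ψ '' closedBall 0 1)ᶜ := by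
    intro x hx
    by_cases hxK : x ∈ ψ '' closedBall 0 1
    · exact Or.inl (hKsub x hx hxK)
    · exact Or.inr hxK
  have hne1 : (ball (0:ℂ) ((n:ℝ)-1) ∩ ψ '' ball 0 1).Nonempty := by
    refine ⟨0, ?_, ⟨0, by simp, by simp [hψ, zero_pow (by omega : n ≠ 0)]⟩⟩
    simpa using hn1
  have hne2 : (ball (0:ℂ) ((n:ℝ)-1) ∩ (ψ '' closedBall 0 1)ᶜ).Nonempty := by
    refine ⟨c, by simpa [mem_ball_zero_iff] using hc, ?_⟩
    intro hcK
    exact hcnot (hKsub c (by simpa [mem_ball_zero_iff] using hc) hcK)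
  obtain ⟨x, -, hx1, hx2⟩ := hconn hsub hne1 hne2
  exact hx2 ((image_mono ball_subset_closedBall) hx1)

lemma omega_ball (n : ℕ) (hn : 4 ≤ n) {w : ℂ}
    (hw : ‖w - 1‖ < ((n:ℝ) - 1) / ((n:ℝ) + 1)) : w ∈ OmeganL n := by
  have hnR : (4:ℝ) ≤ (n:ℝ) := by exact_mod_cast hn
  have hn1 : (0:ℝ) < (n:ℝ) + 1 := by linarith
  have hcabs : ‖((n:ℂ) + 1) * (w - 1)‖ < (n:ℝ) - 1 := by
    rw [norm_mul]
    have : ‖(n:ℂ) + 1‖ = (n:ℝ) + 1 := by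
      rw [show ((n:ℂ) + 1) = (((n:ℝ) + 1 : ℝ) : ℂ) by push_cast; ring, Complex.norm_real, Real.norm_eq_abs,
        abs_of_pos hn1]
    rw [this]
    calc ((n:ℝ) + 1) * ‖w - 1‖ < ((n:ℝ) + 1) * (((n:ℝ) - 1) / ((n:ℝ) + 1)) := by
          exact mul_lt_mul_of_pos_left hw hn1
      _ = (n:ℝ) - 1 := by field_simp
  obtain ⟨z, hz, hzc⟩ := psi_surj n hn hcabs
  refine ⟨z, by simpa [mem_ball_zero_iff] using hz, ?_⟩
  have hne : ((n:ℂ) + 1) ≠ 0 := by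
    have := Nat.cast_add_one_ne_zero (R := ℂ) n
    push_cast at this ⊢
    exact this
  rw [phinL]
  field_simp
  linear_combination hzc

lemma radius_numeric (n : ℕ) (hn : 4 ≤ n) {r : ℝ} (h0 : 0 ≤ r)
    (hr : r < (Real.sqrt (5 * (n:ℝ) ^ 2 + 6 * (n:ℝ) + 5) - 2 * ((n:ℝ) + 1)) / ((n:ℝ) - 1)) :
    r < 1 ∧ 4 * r * ((n:ℝ) + 1) < ((n:ℝ) - 1) * (1 - r ^ 2) := by
  have hnR : (4:ℝ) ≤ (n:ℝ) := by exact_mod_cast hn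
  set s := Real.sqrt (5 * (n:ℝ) ^ 2 + 6 * (n:ℝ) + 5) with hs
  have hs2 : s ^ 2 = 5 * (n:ℝ) ^ 2 + 6 * (n:ℝ) + 5 := Real.sq_sqrt (by nlinarith)
  have hs0 : 0 ≤ s := Real.sqrt_nonneg _
  have hn1 : (0:ℝ) < (n:ℝ) - 1 := by linarith
  have hr' : r * ((n:ℝ) - 1) < s - 2 * ((n:ℝ) + 1) := by
    rw [lt_div_iff₀ hn1] at hr
    linarith
  have hslt : s < 3 * (n:ℝ) + 1 := by nlinarith
  constructor
  · nlinarith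
  · have hkey : (r * ((n:ℝ) - 1) + 2 * ((n:ℝ) + 1)) ^ 2 < s ^ 2 := by
      have h1 : 0 ≤ r * ((n:ℝ) - 1) + 2 * ((n:ℝ) + 1) := by nlinarith
      nlinarith
    nlinarith

theorem stmt14 (n : ℕ) (hn : 4 ≤ n) (hne : Even n)
    (f g : ℂ → ℂ) (hf : IsNormalizedAnalytic f) (hg : IsNormalizedAnalytic g)
    (hfg : ∀ z ∈ ball (0 : ℂ) 1, z ≠ 0 → 0 < (f z / g z).re)
    (hgz : ∀ z ∈ ball (0 : ℂ) 1, z ≠ 0 → 0 < (g z / z).re) :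
    ∀ z : ℂ, 0 < ‖z‖ →
      ‖z‖ <
        (Real.sqrt (5 * (n : ℝ) ^ 2 + 6 * (n : ℝ) + 5) - 2 * ((n : ℝ) + 1)) / ((n : ℝ) - 1) →
      z * deriv f z / f z ∈ OmeganL n := by
  obtain ⟨hfa, hf0, hf1⟩ := hf
  obtain ⟨hga, hg0, hg1⟩ := hg
  have hball : ball (0:ℂ) 1 ∈ nhds (0:ℂ) := isOpen_ball.mem_nhds (by simp)
  have hfd : DifferentiableOn ℂ f (ball 0 1) := hfa.differentiableOn
  have hgd : DifferentiableOn ℂ g (ball 0 1) := hga.differentiableOn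
  set h : ℂ → ℂ := dslope f 0 with hh
  set k : ℂ → ℂ := dslope g 0 with hk
  have hhd : DifferentiableOn ℂ h (ball 0 1) :=
    (Complex.differentiableOn_dslope hball).mpr hfd
  have hkd : DifferentiableOn ℂ k (ball 0 1) :=
    (Complex.differentiableOn_dslope hball).mpr hgd
  have hfz : ∀ u : ℂ, f u = u * h u := by
    intro u
    rcases eq_or_ne u 0 with rfl | hu
    · simp [hf0]
    · rw [hh, dslope_of_ne _ hu, slope_def_field]
      field_simp [hf0]
      rw [hf0]; ring
  have hgzz : ∀ u : ℂ, u ≠ 0 → k u = g u / u := by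
    intro u hu
    rw [hk, dslope_of_ne _ hu, slope_def_field, hg0]
    field_simp
    ring
  have hhz : ∀ u : ℂ, u ≠ 0 → h u = f u / u := by
    intro u hu
    rw [hh, dslope_of_ne _ hu, slope_def_field, hf0]
    field_simp
    ring
  have hgne : ∀ u ∈ ball (0:ℂ) 1, u ≠ 0 → g u ≠ 0 := by
    intro u hu hu0 hgu
    have := hgz u hu hu0
    rw [hgu] at this
    simp at this
  have hfne : ∀ u ∈ ball (0:ℂ) 1, u ≠ 0 → f u ≠ 0 := by
    intro u hu hu0 hfu
    have := hfg u hu hu0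
    rw [hfu] at this
    simp at this
  have hk_re : ∀ u ∈ ball (0:ℂ) 1, 0 < (k u).re := by
    intro u hu
    rcases eq_or_ne u 0 with rfl | hu0
    · rw [hk, dslope_same, hg1]; norm_num
    · rw [hgzz u hu0]; exact hgz u hu hu0
  have hkne : ∀ u ∈ ball (0:ℂ) 1, k u ≠ 0 := by
    intro u hu hku
    have := hk_re u hu
    rw [hku] at this
    simp at this
  set p1 : ℂ → ℂ := fun u => h u / k u with hp1
  have hp1d : DifferentiableOn ℂ p1 (ball 0 1) := hhd.div hkd hkne
  have hp1_re : ∀ u ∈ ball (0:ℂ) 1, 0 < (p1 u).re := by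
    intro u hu
    rcases eq_or_ne u 0 with rfl | hu0
    · have : p1 0 = 1 := by
        rw [hp1]
        simp only [hh, hk]
        rw [dslope_same, dslope_same, hf1, hg1, div_one]
      rw [this]; norm_num
    · have : p1 u = f u / g u := by
        rw [hp1]
        simp only
        rw [hhz u hu0, hgzz u hu0]
        have hgu := hgne u hu hu0
        field_simp
      rw [this]; exact hfg u hu hu0
  have hp1ne : ∀ u ∈ ball (0:ℂ) 1, p1 u ≠ 0 := by
    intro u hu hpu
    have := hp1_re u hu
    rw [hpu] at this
    simp at this
  -- now the specific point
  intro z hz0 hzr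
  have hz0' : z ≠ 0 := by
    intro hzz; rw [hzz] at hz0; simp at hz0
  obtain ⟨hzlt1, hmain⟩ := radius_numeric n hn (norm_nonneg z) hzr
  have hzmem : z ∈ ball (0:ℂ) 1 := by simpa [mem_ball_zero_iff] using hzlt1
  have hpos2 : (0:ℝ) < 1 - ‖z‖ ^ 2 := by nlinarith [norm_nonneg z]
  -- derivatives
  have hhAt : HasDerivAt h (deriv h z) z :=
    (hhd.differentiableAt (isOpen_ball.mem_nhds hzmem)).hasDerivAt
  have hp1At : HasDerivAt p1 (deriv p1 z) z :=
    (hp1d.differentiableAt (isOpen_ball.mem_nhds hzmem)).hasDerivAt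
  have hkAt : HasDerivAt k (deriv k z) z :=
    (hkd.differentiableAt (isOpen_ball.mem_nhds hzmem)).hasDerivAt
  have hderivf : deriv f z = h z + z * deriv h z := by
    have hfun : f = fun u => u * h u := funext hfz
    have : HasDerivAt (fun u => u * h u) (1 * h z + z * deriv h z) z :=
      (hasDerivAt_id z).mul hhAt
    rw [hfun, this.deriv]; ring
  have h_eq_ev : h =ᶠ[nhds z] fun u => p1 u * k u := by
    filter_upwards [isOpen_ball.mem_nhds hzmem] with u hu
    exact (div_mul_cancel₀ (h u) (hkne u hu)).symm
  have hderivh : deriv h z = deriv p1 z * k z + p1 z * deriv k z := by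
    rw [h_eq_ev.deriv_eq]; exact (hp1At.mul hkAt).deriv
  have hhzne : h z ≠ 0 := by
    rw [hhz z hz0']
    exact div_ne_zero (hfne z hzmem hz0') hz0'
  have hfzne : f z ≠ 0 := by rw [hfz z]; exact mul_ne_zero hz0' hhzne
  -- main quantity
  have hW : z * deriv f z / f z - 1 = z * deriv h z / h z := by
    rw [hderivf, hfz z]
    field_simp
    ring
  have hzh : h z = p1 z * k z := (div_mul_cancel₀ (h z) (hkne z hzmem)).symm
  have hsplit : z * deriv h z / h z = z * deriv p1 z / p1 z + z * deriv k z / k z := by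
    have hkz := hkne z hzmem
    have hpz := hp1ne z hzmem
    rw [hderivh, hzh]
    generalize deriv p1 z = P'
    generalize deriv k z = K'
    generalize hPP : p1 z = P at hpz ⊢
    generalize hKK : k z = K at hkz ⊢
    field_simp
  -- abs estimates
  have hb1 := cara_deriv hp1d hp1_re hzmem
  have hb2 := cara_deriv hkd hk_re hzmem
  have hp1pos : 0 < ‖p1 z‖ := norm_pos_iff.mpr (hp1ne z hzmem)
  have hkpos : 0 < ‖k z‖ := norm_pos_iff.mpr (hkne z hzmem)
  have e1 : ‖z * deriv p1 z / p1 z‖ ≤ 2 * ‖z‖ / (1 - ‖z‖ ^ 2) := by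
    rw [norm_div, norm_mul, div_le_div_iff₀ hp1pos hpos2]
    nlinarith [norm_nonneg z, norm_nonneg (deriv p1 z)]
  have e2 : ‖z * deriv k z / k z‖ ≤ 2 * ‖z‖ / (1 - ‖z‖ ^ 2) := by
    rw [norm_div, norm_mul, div_le_div_iff₀ hkpos hpos2]
    nlinarith [norm_nonneg z, norm_nonneg (deriv k z)]
  have etot : ‖z * deriv f z / f z - 1‖ ≤ 4 * ‖z‖ / (1 - ‖z‖ ^ 2) := by
    rw [hW, hsplit]
    calc ‖z * deriv p1 z / p1 z + z * deriv k z / k z‖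
        ≤ ‖z * deriv p1 z / p1 z‖ + ‖z * deriv k z / k z‖ :=
          norm_add_le _ _
      _ ≤ 2 * ‖z‖ / (1 - ‖z‖ ^ 2) + 2 * ‖z‖ / (1 - ‖z‖ ^ 2) := add_le_add e1 e2
      _ = 4 * ‖z‖ / (1 - ‖z‖ ^ 2) := by ring
  have hfinal : ‖z * deriv f z / f z - 1‖ < ((n:ℝ) - 1) / ((n:ℝ) + 1) := by
    have hnR : (4:ℝ) ≤ (n:ℝ) := by exact_mod_cast hn
    have hlt : 4 * ‖z‖ / (1 - ‖z‖ ^ 2) < ((n:ℝ) - 1) / ((n:ℝ) + 1) := by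
      rw [div_lt_div_iff₀ hpos2 (by linarith : (0:ℝ) < (n:ℝ) + 1)]
      nlinarith
    exact lt_of_le_of_lt etot hlt
  exact omega_ball n hn hfinal
end

section
/- Let n ≥ 4 be an even integer and let c be a real number with 1 − 4/(n+1)² < c ≤ 1. Let f be a normalized analytic function on 𝔻 with f(z) ≠ 0 for all z ∈ 𝔻 \ {0}, and suppose the function p defined by p(z) = z f'(z)/f(z) for z ≠ 0 and p(0) = 1 is subordinate to ψ(z) = √(1+cz). Then for every z with 0 < |z| < (n² + 2n − 3)/(c(n+1)²), one has z f'(z)/f(z) ∈ Ω_{nL}. (This is the S*_{nL}-radius of the class S*(√(1+cz)).) -/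
open Complex Metric Set

/-- The open disk of radius (n-1)/(n+1) around 1 is contained in Ω_{nL}. -/
lemma ball_subset_OmeganL (n : ℕ) (hn : 2 ≤ n) :
    ball (1 : ℂ) (((n : ℝ) - 1) / ((n : ℝ) + 1)) ⊆ OmeganL n := by
  set r : ℝ := ((n : ℝ) - 1) / ((n : ℝ) + 1) with hr
  have hn2 : (2 : ℝ) ≤ (n : ℝ) := by exact_mod_cast hn
  have hN1 : (0 : ℝ) < (n : ℝ) + 1 := by linarith
  have hr0 : 0 < r := div_pos (by linarith) hN1
  have hden : ((n : ℂ) + 1) ≠ 0 := by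
    have h : ((n : ℂ) + 1) = ((n + 1 : ℕ) : ℂ) := by push_cast; ring
    rw [h]
    exact Nat.cast_ne_zero.mpr (Nat.succ_ne_zero n)
  -- phinL n is entire
  have hdiff : Differentiable ℂ (phinL n) := by
    have heq : phinL n = fun z => 1 + ((n : ℂ) * z) * ((n : ℂ) + 1)⁻¹ + z ^ n * ((n : ℂ) + 1)⁻¹ := by
      funext z; rw [phinL, div_eq_mul_inv, div_eq_mul_inv]
    rw [heq]
    fun_prop
  have hφa : AnalyticOnNhd ℂ (phinL n) univ :=
    hdiff.differentiableOn.analyticOnNhd isOpen_univ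
  have hφ0 : phinL n 0 = 1 := by
    have hn0 : n ≠ 0 := by omega
    simp [phinL, zero_pow hn0]
  have hφ1 : phinL n 1 = 2 := by
    simp only [phinL, one_pow, mul_one]
    field_simp
    ring
  -- Ω is open
  have hΩopen : IsOpen (OmeganL n) := by
    rcases hφa.is_constant_or_isOpen isPreconnected_univ with ⟨w, hw⟩ | hopen
    · exfalso
      have h1 := hw 0 (mem_univ _)
      have h2 := hw 1 (mem_univ _)
      rw [hφ0] at h1; rw [hφ1] at h2
      rw [← h1] at h2
      norm_num at h2
    · exact hopen _ (subset_univ _) isOpen_ball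
  -- closure Ω inside image of closed ball
  have hK : IsCompact (phinL n '' closedBall (0 : ℂ) 1) :=
    (isCompact_closedBall 0 1).image hdiff.continuous
  have hcl : closure (OmeganL n) ⊆ phinL n '' closedBall (0 : ℂ) 1 :=
    closure_minimal (image_mono ball_subset_closedBall) hK.isClosed
  -- boundary estimate
  have hbd : ∀ ζ : ℂ, ‖ζ‖ = 1 → r ≤ ‖phinL n ζ - 1‖ := by
    intro ζ hζ
    have heq : phinL n ζ - 1 = ((n : ℂ) * ζ + ζ ^ n) / ((n : ℂ) + 1) := by
      rw [phinL]; field_simp; ring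
    have habs1 : ‖(n : ℂ) + 1‖ = (n : ℝ) + 1 := by
      have h : ((n : ℂ) + 1) = ((n + 1 : ℕ) : ℂ) := by push_cast; ring
      rw [h, Complex.norm_natCast]; push_cast; ring
    rw [heq, norm_div, habs1, hr]
    have h1 : ‖(n : ℂ) * ζ‖ = (n : ℝ) := by
      rw [norm_mul, hζ, Complex.norm_natCast, mul_one]
    have h2 : ‖ζ ^ n‖ = 1 := by rw [norm_pow, hζ, one_pow]
    have htri : ‖(n : ℂ) * ζ‖ ≤
        ‖(n : ℂ) * ζ + ζ ^ n‖ + ‖ζ ^ n‖ := by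
      have := norm_add_le ((n : ℂ) * ζ + ζ ^ n) (-(ζ ^ n))
      simpa using this
    have hge : (n : ℝ) - 1 ≤ ‖(n : ℂ) * ζ + ζ ^ n‖ := by
      rw [h1, h2] at htri; linarith
    gcongr
  -- frontier is disjoint from the small disk
  have hfr : ∀ w ∈ ball (1 : ℂ) r, w ∉ frontier (OmeganL n) := by
    intro w hw hwfr
    have hwcl : w ∈ closure (OmeganL n) := hwfr.1
    have hwnΩ : w ∉ OmeganL n := by
      intro hmem
      rw [← hΩopen.interior_eq] at hmem
      exact hwfr.2 hmem
    obtain ⟨ζ, hζmem, hζeq⟩ := hcl hwcl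
    have hζ1 : ‖ζ‖ = 1 := by
      rcases lt_or_eq_of_le (mem_closedBall_zero_iff.mp hζmem) with h | h
      · exact absurd ⟨ζ, mem_ball_zero_iff.mpr h, hζeq⟩ hwnΩ
      · exact h
    have := hbd ζ hζ1
    rw [hζeq] at this
    have hlt : ‖w - 1‖ < r := by
      rw [mem_ball, dist_eq] at hw; exact hw
    linarith
  -- connectedness argument
  have hsubun : ball (1 : ℂ) r ⊆ OmeganL n ∪ (closure (OmeganL n))ᶜ := by
    intro w hw
    by_cases hmem : w ∈ OmeganL n
    · exact Or.inl hmem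
    · refine Or.inr fun hwc => hfr w hw ⟨hwc, ?_⟩
      rw [hΩopen.interior_eq]; exact hmem
  have hnonempty : (ball (1 : ℂ) r ∩ OmeganL n).Nonempty :=
    ⟨1, mem_ball_self hr0, ⟨0, mem_ball_self one_pos, hφ0⟩⟩
  exact IsPreconnected.subset_left_of_subset_union hΩopen
    (isOpen_compl_iff.mpr isClosed_closure)
    (Set.disjoint_left.mpr fun x hx hx2 => hx2 (subset_closure hx))
    hsubun hnonempty (convex_ball (1 : ℂ) r).isPreconnected

/-- Estimate for the principal square root: if |u| < a < 1 then
    |√(1+u) - 1| < a / (1 + √(1-a)). -/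
lemma sqrt_est (a : ℝ) (ha0 : 0 < a) (ha1 : a < 1) (u : ℂ) (hu : ‖u‖ < a) :
    ‖(1 + u) ^ ((1 : ℂ) / 2) - 1‖ < a / (1 + Real.sqrt (1 - a)) := by
  set s : ℂ := (1 + u) ^ ((1 : ℂ) / 2) with hs
  set t : ℝ := Real.sqrt (1 - a) with ht
  have ht0 : 0 ≤ t := Real.sqrt_nonneg _
  have ht2 : t ^ 2 = 1 - a := Real.sq_sqrt (by linarith)
  have hune : (1 : ℂ) + u ≠ 0 := by
    intro h
    have : ‖u‖ = 1 := by
      have : u = -1 := by linear_combination h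
      rw [this]; simp
    linarith
  -- s * s = 1 + u
  have hss : s * s = 1 + u := by
    rw [hs, ← Complex.cpow_add _ _ hune]
    norm_num
  -- 0 ≤ s.re
  have hsre0 : 0 ≤ s.re := by
    rw [hs, Complex.cpow_def_of_ne_zero hune]
    rw [Complex.exp_re]
    apply mul_nonneg (Real.exp_nonneg _)
    apply Real.cos_nonneg_of_mem_Icc
    constructor
    · have h1 : -Real.pi < (Complex.log (1 + u)).im := by
        rw [Complex.log_im]; exact Complex.neg_pi_lt_arg _
      have him : (Complex.log (1 + u) * (1 / 2)).im = (Complex.log (1 + u)).im / 2 := by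
        simp [Complex.mul_im]
        ring
      rw [him]
      have hpi : 0 < Real.pi := Real.pi_pos
      linarith
    · have h1 : (Complex.log (1 + u)).im ≤ Real.pi := by
        rw [Complex.log_im]; exact Complex.arg_le_pi _
      have him : (Complex.log (1 + u) * (1 / 2)).im = (Complex.log (1 + u)).im / 2 := by
        simp [Complex.mul_im]
        ring
      rw [him]
      have hpi : 0 < Real.pi := Real.pi_pos
      linarith
  -- |u.re| ≤ |u| and |1+u| ≥ 1 - |u|
  have hure : -(‖u‖) ≤ u.re :=
    neg_le_of_abs_le (Complex.abs_re_le_norm u)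
  have habs1u : 1 - ‖u‖ ≤ ‖1 + u‖ := by
    have := norm_add_le (1 + u) (-u)
    simp at this
    linarith
  -- s.re ^ 2 ≥ 1 - a
  have hre2 : 1 - a ≤ s.re ^ 2 := by
    have h1 : (s * s).re = s.re ^ 2 - s.im ^ 2 := by
      simp [Complex.mul_re]; ring
    have h2 : (‖s‖) ^ 2 = s.re ^ 2 + s.im ^ 2 := by
      rw [Complex.sq_norm, Complex.normSq_apply]; ring
    have h3 : (‖s‖) ^ 2 = ‖1 + u‖ := by
      rw [sq, ← norm_mul, hss]
    have h4 : (s * s).re = 1 + u.re := by rw [hss]; simp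
    -- 2 * s.re^2 = (1 + u.re) + |1+u| ≥ (1-a) + (1-a)
    nlinarith [habs1u, hure, hu]
  have hsret : t ≤ s.re := by
    nlinarith
  -- s + 1 ≠ 0 and |s+1| ≥ 1 + t
  have habs_s1 : 1 + t ≤ ‖s + 1‖ := by
    have h2 : (‖s + 1‖) ^ 2 = (s.re + 1) ^ 2 + s.im ^ 2 := by
      rw [Complex.sq_norm, Complex.normSq_apply]
      simp [Complex.add_re, Complex.add_im]
      ring
    nlinarith [norm_nonneg (s + 1), sq_nonneg s.im]
  have hs1ne : s + 1 ≠ 0 := by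
    intro h
    rw [h] at habs_s1
    simp at habs_s1
    linarith
  -- s - 1 = u / (s + 1)
  have hdiv : s - 1 = u / (s + 1) := by
    rw [eq_div_iff hs1ne]
    linear_combination hss
  rw [hdiv, norm_div]
  have hpos : 0 < 1 + t := by linarith
  have hpos2 : 0 < ‖s + 1‖ := lt_of_lt_of_le hpos habs_s1
  calc ‖u‖ / ‖s + 1‖ ≤ ‖u‖ / (1 + t) := by
        gcongr
    _ < a / (1 + t) := by gcongr

theorem stmt16 (n : ℕ) (hn : 4 ≤ n) (hne : Even n) (c : ℝ)
    (hc1 : 1 - 4 / ((n : ℝ) + 1) ^ 2 < c) (hc2 : c ≤ 1)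
    (f : ℂ → ℂ) (hf : IsNormalizedAnalytic f)
    (hfz : ∀ z ∈ ball (0 : ℂ) 1, z ≠ 0 → f z ≠ 0)
    (hsub : Subord (fun z => if z = 0 then 1 else z * deriv f z / f z)
      (fun z => (1 + (c : ℂ) * z) ^ ((1 : ℂ) / 2))) :
    ∀ z : ℂ, 0 < ‖z‖ →
      ‖z‖ < ((n : ℝ) ^ 2 + 2 * (n : ℝ) - 3) / (c * ((n : ℝ) + 1) ^ 2) →
      z * deriv f z / f z ∈ OmeganL n := by
  intro z hz0 hzρ
  have hn4 : (4 : ℝ) ≤ (n : ℝ) := by exact_mod_cast hn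
  have hN1 : (0 : ℝ) < (n : ℝ) + 1 := by linarith
  have hN1sq : (0 : ℝ) < ((n : ℝ) + 1) ^ 2 := by positivity
  have ha_def : 1 - 4 / ((n : ℝ) + 1) ^ 2
      = ((n : ℝ) ^ 2 + 2 * (n : ℝ) - 3) / ((n : ℝ) + 1) ^ 2 := by
    field_simp; ring
  set a : ℝ := ((n : ℝ) ^ 2 + 2 * (n : ℝ) - 3) / ((n : ℝ) + 1) ^ 2 with ha
  have ha0 : 0 < a := div_pos (by nlinarith) hN1sq
  have hfour : 0 < 4 / ((n : ℝ) + 1) ^ 2 := by positivity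
  have ha1 : a < 1 := by rw [← ha_def]; linarith
  have hac : a < c := by linarith [hc1, ha_def]
  have hc0 : 0 < c := lt_trans ha0 hac
  have hρ : ((n : ℝ) ^ 2 + 2 * (n : ℝ) - 3) / (c * ((n : ℝ) + 1) ^ 2) = a / c := by
    rw [ha, div_div, mul_comm]; ring_nf
  rw [hρ] at hzρ
  have hcz : c * ‖z‖ < a := by
    have := (lt_div_iff₀ hc0).mp hzρ
    linarith [mul_comm c (‖z‖)]
  have hz1 : ‖z‖ < 1 := hzρ.trans_le (le_of_lt ((div_lt_one hc0).mpr hac))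
  have hzball : z ∈ ball (0 : ℂ) 1 := mem_ball_zero_iff.mpr hz1
  have hzne : z ≠ 0 := by
    intro h; rw [h] at hz0; simp at hz0
  obtain ⟨ω, hω1, hω2, hω3, hω4⟩ := hsub
  have hval := hω4 z hzball
  simp only [if_neg hzne] at hval
  have hSchwarz : ‖ω z‖ ≤ ‖z‖ :=
    Complex.norm_le_norm_of_mapsTo_ball
      (fun x hx => (hω1 x hx).differentiableAt.differentiableWithinAt)
      (fun x hx => ball_subset_closedBall (hω3 x hx)) hω2 hz1
  set u : ℂ := (c : ℂ) * ω z with hudef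
  have hu : ‖u‖ < a := by
    rw [hudef, norm_mul, Complex.norm_real, Real.norm_eq_abs, abs_of_pos hc0]
    calc c * ‖ω z‖ ≤ c * ‖z‖ := by gcongr
      _ < a := hcz
  have hest := sqrt_est a ha0 ha1 u hu
  have h1a : 1 - a = (2 / ((n : ℝ) + 1)) ^ 2 := by
    rw [ha]; field_simp; ring
  have hsq : Real.sqrt (1 - a) = 2 / ((n : ℝ) + 1) := by
    rw [h1a, Real.sqrt_sq (by positivity)]
  have hr_eq : a / (1 + Real.sqrt (1 - a)) = ((n : ℝ) - 1) / ((n : ℝ) + 1) := by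
    rw [hsq, ha]; field_simp; ring
  rw [hval]
  apply ball_subset_OmeganL n (by omega)
  rw [mem_ball, Complex.dist_eq, ← hr_eq]
  exact hest
end

section
/- Let n ≥ 4 be an even integer, let 1 < β ≤ 2, and let s ∈ (0,1] be the unique root of the equation rⁿ + nr = (n+1)(β−1) in (0,1]. If f ∈ S*_{nL}, then for every z with 0 < |z| < s, Re( z f'(z)/f(z) ) < β. (This is the M(β)-radius of the class S*_{nL}.) -/
open Complex Metric Set

theorem stmt18 (n : ℕ) (hn : 4 ≤ n) (hne : Even n) (β : ℝ) (hβ1 : 1 < β) (hβ2 : β ≤ 2)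
    (s : ℝ) (hs : s ∈ Set.Ioc (0 : ℝ) 1)
    (hroot : s ^ n + (n : ℝ) * s = ((n : ℝ) + 1) * (β - 1))
    (f : ℂ → ℂ) (hf : MemSnL n f) :
    ∀ z : ℂ, 0 < ‖z‖ → ‖z‖ < s →
      (z * deriv f z / f z).re < β := by
  obtain ⟨hna, hnz, ω, hωa, hω0, hωmap, hωeq⟩ := hf
  obtain ⟨hs0, hs1⟩ := hs
  intro z hz0 hzs
  have hzs1 : ‖z‖ < 1 := lt_of_lt_of_le hzs hs1
  have hz1 : z ∈ ball (0 : ℂ) 1 := mem_ball_zero_iff.2 hzs1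
  have hzne : z ≠ 0 := by
    intro h; simp [h] at hz0
  have heq := hωeq z hz1
  simp only [if_neg hzne] at heq
  have hωz : ‖ω z‖ ≤ ‖z‖ :=
    Complex.norm_le_norm_of_mapsTo_ball (fun x hx => (hωa x hx).differentiableAt.differentiableWithinAt)
      (fun x hx => ball_subset_closedBall (hωmap x hx)) hω0 hzs1
  set w := ω z with hw
  set t := ‖w‖ with ht
  have hts : t < s := lt_of_le_of_lt hωz hzs
  have ht0 : 0 ≤ t := norm_nonneg w
  have hn1 : (0 : ℝ) < (n : ℝ) + 1 := by positivity
  -- rewrite phinL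
  have hphi : phinL n w = 1 + ((n : ℂ) * w + w ^ n) / ((n : ℂ) + 1) := by
    have hcne : ((n : ℂ) + 1) ≠ 0 := Nat.cast_add_one_ne_zero n
    unfold phinL; field_simp; ring
  have hreb : (phinL n w).re ≤ 1 + ((n : ℝ) * t + t ^ n) / ((n : ℝ) + 1) := by
    rw [hphi]
    have h1 : (1 + ((n : ℂ) * w + w ^ n) / ((n : ℂ) + 1)).re
        = 1 + (((n : ℂ) * w + w ^ n) / ((n : ℂ) + 1)).re := by simp
    rw [h1]
    have h2 : (((n : ℂ) * w + w ^ n) / ((n : ℂ) + 1)).re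
        ≤ ‖((n : ℂ) * w + w ^ n) / ((n : ℂ) + 1)‖ := Complex.re_le_norm _
    have h3 : ‖((n : ℂ) * w + w ^ n) / ((n : ℂ) + 1)‖
        ≤ ((n : ℝ) * t + t ^ n) / ((n : ℝ) + 1) := by
      rw [norm_div]
      have habs : ‖(n : ℂ) + 1‖ = (n : ℝ) + 1 := by
        have : ((n : ℂ) + 1) = (((n : ℝ) + 1 : ℝ) : ℂ) := by push_cast; ring
        rw [this, Complex.norm_of_nonneg hn1.le]
      rw [habs]
      gcongr
      calc ‖(n : ℂ) * w + w ^ n‖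
          ≤ ‖(n : ℂ) * w‖ + ‖w ^ n‖ := norm_add_le _ _
        _ = (n : ℝ) * t + t ^ n := by
            rw [norm_mul, norm_pow, Complex.norm_natCast]
    linarith
  have hmono : (n : ℝ) * t + t ^ n < (n : ℝ) * s + s ^ n := by
    have h4 : (n : ℝ) * t < (n : ℝ) * s := by
      have hn0 : (0 : ℝ) < (n : ℝ) := by
        have : (0 : ℕ) < n := by omega
        exact_mod_cast this
      exact mul_lt_mul_of_pos_left hts hn0
    have h5 : t ^ n ≤ s ^ n := pow_le_pow_left₀ ht0 hts.le n
    linarith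
  have hfin : 1 + ((n : ℝ) * s + s ^ n) / ((n : ℝ) + 1) = β := by
    field_simp
    linarith [hroot]
  have : (z * deriv f z / f z).re ≤ 1 + ((n : ℝ) * t + t ^ n) / ((n : ℝ) + 1) := by
    rw [heq]; exact hreb
  have hdivlt : ((n : ℝ) * t + t ^ n) / ((n : ℝ) + 1)
      < ((n : ℝ) * s + s ^ n) / ((n : ℝ) + 1) := by gcongr
  linarith
end

section
/- Let n ≥ 4 be an even integer, let 0 ≤ α < 1, and let s ∈ (0,1] be the unique root of the equation rⁿ + nr = (n+1)(1−α) in (0,1]. If f ∈ S*_{nL}, then for every z with 0 < |z| < s, |z f'(z)/f(z) − 1| < 1 − α. (This is the S*[1−α, 0]-radius of the class S*_{nL}.) -/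
open Complex Metric Set

theorem stmt19 (n : ℕ) (hn : 4 ≤ n) (hne : Even n) (α : ℝ) (hα1 : 0 ≤ α) (hα2 : α < 1)
    (s : ℝ) (hs : s ∈ Set.Ioc (0 : ℝ) 1)
    (hroot : s ^ n + (n : ℝ) * s = ((n : ℝ) + 1) * (1 - α))
    (f : ℂ → ℂ) (hf : MemSnL n f) :
    ∀ z : ℂ, 0 < ‖z‖ → ‖z‖ < s →
      ‖z * deriv f z / f z - 1‖ < 1 - α := by
  obtain ⟨hna, hfz, ω, hωa, hω0, hωmap, hωeq⟩ := hf
  intro z hz0 hzs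
  have hzne : z ≠ 0 := by
    intro h; simp [h] at hz0
  have hz1 : z ∈ ball (0 : ℂ) 1 := by
    rw [mem_ball_zero_iff]
    exact lt_of_lt_of_le hzs hs.2
  have heq := hωeq z hz1
  simp only [if_neg hzne] at heq
  rw [heq]
  -- Schwarz
  have hω1 : ‖ω z‖ ≤ ‖z‖ :=
    Complex.norm_le_norm_of_mapsTo_ball
      (hωa.differentiableOn) (fun x hx => ball_subset_closedBall (hωmap x hx)) hω0
      (by rwa [mem_ball_zero_iff] at hz1)
  set w := ω z
  have hden : ((n : ℂ) + 1) ≠ 0 := by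
    exact Nat.cast_add_one_ne_zero n
  have h1 : phinL n w - 1 = ((n : ℂ) * w + w ^ n) / ((n : ℂ) + 1) := by
    rw [phinL]; ring
  rw [h1]
  have habs : ‖((n : ℂ) * w + w ^ n) / ((n : ℂ) + 1)‖
      ≤ ((n : ℝ) * ‖w‖ + ‖w‖ ^ n) / ((n : ℝ) + 1) := by
    rw [norm_div]
    have h2 : ‖(n : ℂ) + 1‖ = (n : ℝ) + 1 := by
      rw [show ((n : ℂ) + 1) = ((n + 1 : ℕ) : ℂ) by push_cast; ring]
      rw [Complex.norm_natCast]; push_cast; ring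
    rw [h2]
    gcongr
    calc ‖(n : ℂ) * w + w ^ n‖
        ≤ ‖(n : ℂ) * w‖ + ‖w ^ n‖ := norm_add_le _ _
      _ = (n : ℝ) * ‖w‖ + ‖w‖ ^ n := by
          rw [norm_mul, norm_pow, Complex.norm_natCast]
  refine lt_of_le_of_lt habs ?_
  rw [div_lt_iff₀ (by positivity)]
  have hws : ‖w‖ < s := lt_of_le_of_lt hω1 hzs
  have hwnn : (0:ℝ) ≤ ‖w‖ := norm_nonneg w
  have h4 : (n : ℝ) * ‖w‖ + ‖w‖ ^ n < (n : ℝ) * s + s ^ n := by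
    have h5 : ‖w‖ ^ n ≤ s ^ n := pow_le_pow_left₀ hwnn hws.le n
    have h6 : (n : ℝ) * ‖w‖ < (n : ℝ) * s := by
      have : (0:ℝ) < (n : ℝ) := by positivity
      exact mul_lt_mul_of_pos_left hws this
    linarith
  calc (n : ℝ) * ‖w‖ + ‖w‖ ^ n < (n : ℝ) * s + s ^ n := h4
    _ = ((n : ℝ) + 1) * (1 - α) := by linarith [hroot]
    _ = (1 - α) * ((n : ℝ) + 1) := by ring
end
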